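/- Let F : [0,∞]² → Vec_𝔽 be a pointwise finite-dimensional middle-exact bipersistence module. Then the kernel K(x,y) = ker(F(x,y) → lim(F(x,∞) → F(∞,∞) ← F(∞,y))), taken objectwise, defines a subfunctor K of F such that the quotient map F → F/K is a split epimorphism in the functor category, i.e., F ≅ K ⊕ (F/K). -/

import Mathlib

open CategoryTheory CategoryTheory.Limits

/-- We regard the poset `[0,∞]² = ENNReal × ENNReal` as a category via its
product partial order. -/
noncomputable local instance (priority := 2000) : Category (ENNReal × ENNReal) :=
  Preorder.smallCategory _

/-- A commuting square `α : A ⟶ B`, `f : A ⟶ C`, `g : B ⟶ D`, `β : C ⟶ D`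
(with `α ≫ g = f ≫ β`) is *middle-exact* if the associated complex
`A ⟶ B ⊞ C ⟶ D`, with maps `(α, f)` and `(g, -β)`, is exact in the middle. -/
def MiddleExact {𝒜 : Type*} [Category 𝒜] [Abelian 𝒜] {A B C D : 𝒜}
    (α : A ⟶ B) (f : A ⟶ C) (g : B ⟶ D) (β : C ⟶ D) (w : α ≫ g = f ≫ β) : Prop :=
  (ShortComplex.mk (biprod.lift α f) (biprod.desc g (-β))
    (by simp [biprod.lift_desc, w])).Exact

/-- The square `F(x ⊓ y) → F(x) → F(x ⊔ y)`, `F(x ⊓ y) → F(y) → F(x ⊔ y)` commutes. -/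
theorem squareW {P : Type*} [Lattice P] {𝒜 : Type*} [Category 𝒜] (F : P ⥤ 𝒜) (x y : P) :
    F.map (homOfLE (inf_le_left : x ⊓ y ≤ x)) ≫ F.map (homOfLE (le_sup_left : x ≤ x ⊔ y)) =
      F.map (homOfLE (inf_le_right : x ⊓ y ≤ y)) ≫
        F.map (homOfLE (le_sup_right : y ≤ x ⊔ y)) := by
  rw [← F.map_comp, ← F.map_comp]
  exact congrArg F.map (Subsingleton.elim _ _)

/-- A functor from a lattice to an abelian category is *(2-)middle-exact* if each
square `F(x ⊓ y), F(x), F(y), F(x ⊔ y)` is middle-exact. -/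
def TwoMiddleExact {P : Type*} [Lattice P] {𝒜 : Type*} [Category 𝒜] [Abelian 𝒜]
    (F : P ⥤ 𝒜) : Prop :=
  ∀ x y : P, MiddleExact (F.map (homOfLE (inf_le_left : x ⊓ y ≤ x)))
    (F.map (homOfLE (inf_le_right : x ⊓ y ≤ y)))
    (F.map (homOfLE (le_sup_left : x ≤ x ⊔ y)))
    (F.map (homOfLE (le_sup_right : y ≤ x ⊔ y))) (squareW F x y)

variable {𝔽 : Type*} [Field 𝔽]

/-- The pullback `lim (F(x,∞) → F(∞,∞) ← F(∞,y))`, realized as a submodule of the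
product `F(x,∞) × F(∞,y)`. -/
noncomputable def pbSubmodule (F : ENNReal × ENNReal ⥤ ModuleCat 𝔽)
    (p : ENNReal × ENNReal) :
    Submodule 𝔽 (F.obj (p.1, ⊤) × F.obj (⊤, p.2)) :=
  LinearMap.ker
    ((F.map (homOfLE (⟨le_top, le_rfl⟩ : (p.1, (⊤ : ENNReal)) ≤ (⊤, ⊤)))).hom.comp
        (LinearMap.fst 𝔽 (F.obj (p.1, ⊤)) (F.obj (⊤, p.2))) -
      (F.map (homOfLE (⟨le_rfl, le_top⟩ : ((⊤ : ENNReal), p.2) ≤ (⊤, ⊤)))).hom.comp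
        (LinearMap.snd 𝔽 (F.obj (p.1, ⊤)) (F.obj (⊤, p.2))))

/-- The canonical map `F(x,y) → lim (F(x,∞) → F(∞,∞) ← F(∞,y))` induced by the
structure maps of `F`. -/
noncomputable def toPB (F : ENNReal × ENNReal ⥤ ModuleCat 𝔽) (p : ENNReal × ENNReal) :
    F.obj p →ₗ[𝔽] pbSubmodule F p :=
  LinearMap.codRestrict _
    (LinearMap.prod (F.map (homOfLE (⟨le_rfl, le_top⟩ : p ≤ (p.1, ⊤)))).hom
      (F.map (homOfLE (⟨le_top, le_rfl⟩ : p ≤ (⊤, p.2)))).hom)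
    (fun v => by
      have comm :
          F.map (homOfLE (⟨le_rfl, le_top⟩ : p ≤ (p.1, ⊤))) ≫
              F.map (homOfLE (⟨le_top, le_rfl⟩ : (p.1, (⊤ : ENNReal)) ≤ (⊤, ⊤))) =
            F.map (homOfLE (⟨le_top, le_rfl⟩ : p ≤ (⊤, p.2))) ≫
              F.map (homOfLE (⟨le_rfl, le_top⟩ : ((⊤ : ENNReal), p.2) ≤ (⊤, ⊤))) := by
        rw [← F.map_comp, ← F.map_comp]
        exact congrArg F.map (Subsingleton.elim _ _)
      simp only [pbSubmodule, LinearMap.mem_ker, LinearMap.sub_apply, LinearMap.coe_comp,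
        Function.comp_apply, LinearMap.fst_apply, LinearMap.snd_apply, LinearMap.prod_apply,
        Pi.prod]
      rw [sub_eq_zero]
      exact LinearMap.congr_fun (congrArg ModuleCat.Hom.hom comm) v)

namespace MESplit

variable {𝔽 : Type*} [Field 𝔽] (F : ENNReal × ENNReal ⥤ ModuleCat 𝔽)

/-- The structure map of `F` as a linear map. -/
noncomputable def res {p q : ENNReal × ENNReal} (h : p ≤ q) : F.obj p →ₗ[𝔽] F.obj q :=
  (F.map (homOfLE h)).hom

lemma res_res {p q r : ENNReal × ENNReal} (h : p ≤ q) (h' : q ≤ r) (v : F.obj p) :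
    res F h' (res F h v) = res F (h.trans h') v := by
  have : (res F h').comp (res F h) = res F (h.trans h') := by
    show (F.map (homOfLE h) ≫ F.map (homOfLE h')).hom = _
    rw [← F.map_comp]
    exact congrArg (fun g => (F.map g).hom) (Subsingleton.elim _ _)
  exact LinearMap.congr_fun this v

@[simp] lemma res_self {p : ENNReal × ENNReal} (h : p ≤ p) (v : F.obj p) :
    res F h v = v := by
  have : res F h = LinearMap.id (R := 𝔽) (M := F.obj p) := by
    show (F.map (homOfLE h)).hom = ModuleCat.Hom.hom (𝟙 (F.obj p))
    rw [← F.map_id]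
    exact congrArg (fun g => (F.map g).hom) (Subsingleton.elim _ _)
  rw [this]; rfl

lemma mem_pb {p : ENNReal × ENNReal} (u : F.obj (p.1, ⊤) × F.obj (⊤, p.2)) :
    u ∈ pbSubmodule F p ↔
      res F (⟨le_top, le_rfl⟩ : (p.1, (⊤:ENNReal)) ≤ (⊤, ⊤)) u.1 =
        res F (⟨le_rfl, le_top⟩ : ((⊤:ENNReal), p.2) ≤ (⊤, ⊤)) u.2 := by
  simp only [pbSubmodule, LinearMap.mem_ker, LinearMap.sub_apply, LinearMap.coe_comp,
    Function.comp_apply, LinearMap.fst_apply, LinearMap.snd_apply, sub_eq_zero]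
  rfl

lemma toPB_coe_fst {p : ENNReal × ENNReal} (v : F.obj p) :
    (toPB F p v).val.1 = res F (⟨le_rfl, le_top⟩ : p ≤ (p.1, ⊤)) v := rfl

lemma toPB_coe_snd {p : ENNReal × ENNReal} (v : F.obj p) :
    (toPB F p v).val.2 = res F (⟨le_top, le_rfl⟩ : p ≤ (⊤, p.2)) v := rfl

end MESplit
namespace MESplit

variable {𝔽 : Type*} [Field 𝔽] (F : ENNReal × ENNReal ⥤ ModuleCat 𝔽)

/-- The transition maps of the pullback modules. -/
noncomputable def gPB {p q : ENNReal × ENNReal} (h : p ≤ q) :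
    pbSubmodule F p →ₗ[𝔽] pbSubmodule F q :=
  LinearMap.codRestrict _
    (((res F (⟨h.1, le_rfl⟩ : (p.1, (⊤:ENNReal)) ≤ (q.1, ⊤))).prodMap
        (res F (⟨le_rfl, h.2⟩ : ((⊤:ENNReal), p.2) ≤ (⊤, q.2)))).comp
      (pbSubmodule F p).subtype)
    (by
      intro u
      rw [mem_pb]
      simp only [LinearMap.coe_comp, Function.comp_apply, Submodule.coe_subtype,
        LinearMap.prodMap_apply, Prod.fst, Prod.snd]
      rw [res_res, res_res]
      exact (mem_pb F _).mp u.2)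

lemma gPB_coe_fst {p q : ENNReal × ENNReal} (h : p ≤ q) (u : pbSubmodule F p) :
    (gPB F h u).val.1
      = res F (⟨h.1, le_rfl⟩ : (p.1, (⊤:ENNReal)) ≤ (q.1, ⊤)) u.val.1 := rfl

lemma gPB_coe_snd {p q : ENNReal × ENNReal} (h : p ≤ q) (u : pbSubmodule F p) :
    (gPB F h u).val.2
      = res F (⟨le_rfl, h.2⟩ : ((⊤:ENNReal), p.2) ≤ (⊤, q.2)) u.val.2 := rfl

lemma gPB_gPB {p q r : ENNReal × ENNReal} (h : p ≤ q) (h' : q ≤ r) (u : pbSubmodule F p) :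
    gPB F h' (gPB F h u) = gPB F (h.trans h') u := by
  apply Subtype.ext
  apply Prod.ext
  · rw [gPB_coe_fst, gPB_coe_fst, gPB_coe_fst, res_res]
  · rw [gPB_coe_snd, gPB_coe_snd, gPB_coe_snd, res_res]

@[simp] lemma gPB_self {p : ENNReal × ENNReal} (h : p ≤ p) (u : pbSubmodule F p) :
    gPB F h u = u := by
  apply Subtype.ext
  apply Prod.ext
  · rw [gPB_coe_fst, res_self]
  · rw [gPB_coe_snd, res_self]

lemma toPB_natural {p q : ENNReal × ENNReal} (h : p ≤ q) (v : F.obj p) :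
    gPB F h (toPB F p v) = toPB F q (res F h v) := by
  apply Subtype.ext
  apply Prod.ext
  · rw [gPB_coe_fst, toPB_coe_fst, toPB_coe_fst, res_res, res_res]
  · rw [gPB_coe_snd, toPB_coe_snd, toPB_coe_snd, res_res, res_res]

/-- `s` is a linear section of `toPB` at `p`. -/
def IsSec {p : ENNReal × ENNReal} (s : pbSubmodule F p →ₗ[𝔽] F.obj p) : Prop :=
  ∀ u, toPB F p (s u) = u

/-- Compatibility of candidate sections at `p ≤ q`. -/
def NatAt {p q : ENNReal × ENNReal} (h : p ≤ q) (s : pbSubmodule F p →ₗ[𝔽] F.obj p)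
    (t : pbSubmodule F q →ₗ[𝔽] F.obj q) : Prop :=
  ∀ u, res F h (s u) = t (gPB F h u)

lemma natAt_trans {p q r : ENNReal × ENNReal} (h : p ≤ q) (h' : q ≤ r)
    {s t w} (h1 : NatAt F h s t) (h2 : NatAt F h' t w) : NatAt F (h.trans h') s w := by
  intro u
  rw [← gPB_gPB F h h', ← h2, ← h1, res_res]

lemma natAt_self {p : ENNReal × ENNReal} (h : p ≤ p) (s : pbSubmodule F p →ₗ[𝔽] F.obj p) :
    NatAt F h s s := by
  intro u; rw [res_self, gPB_self]

end MESplit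
namespace MESplit

variable {𝔽 : Type*} [Field 𝔽] (F : ENNReal × ENNReal ⥤ ModuleCat 𝔽)

/-- Element-wise middle exactness. -/
lemma mx (hme : TwoMiddleExact F) {a b : ENNReal × ENNReal} (w₁ : F.obj a) (w₂ : F.obj b)
    (hw : res F (le_sup_left : a ≤ a ⊔ b) w₁ = res F (le_sup_right : b ≤ a ⊔ b) w₂) :
    ∃ v : F.obj (a ⊓ b),
      res F (inf_le_left : a ⊓ b ≤ a) v = w₁ ∧ res F (inf_le_right : a ⊓ b ≤ b) v = w₂ := by
  have h := (ShortComplex.moduleCat_exact_iff _).mp (hme a b)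
  set α := F.map (homOfLE (inf_le_left : a ⊓ b ≤ a)) with hα
  set f := F.map (homOfLE (inf_le_right : a ⊓ b ≤ b)) with hf
  set g := F.map (homOfLE (le_sup_left : a ≤ a ⊔ b)) with hg
  set β := F.map (homOfLE (le_sup_right : b ≤ a ⊔ b)) with hβ
  set x₂ := (biprod.inl : F.obj a ⟶ F.obj a ⊞ F.obj b) w₁ +
    (biprod.inr : F.obj b ⟶ F.obj a ⊞ F.obj b) w₂ with hx₂
  obtain ⟨v, hv⟩ := h x₂ (by
    show (biprod.desc g (-β)) x₂ = 0
    rw [hx₂, map_add]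
    have e1 : (biprod.desc g (-β)) ((biprod.inl : F.obj a ⟶ F.obj a ⊞ F.obj b) w₁)
        = g w₁ := by
      have : ((biprod.inl ≫ biprod.desc g (-β)) : F.obj a ⟶ F.obj (a ⊔ b)) w₁
          = (biprod.desc g (-β)) ((biprod.inl : F.obj a ⟶ F.obj a ⊞ F.obj b) w₁) := rfl
      rw [← this, biprod.inl_desc]
    have e2 : (biprod.desc g (-β)) ((biprod.inr : F.obj b ⟶ F.obj a ⊞ F.obj b) w₂)
        = -(β w₂) := by
      have : ((biprod.inr ≫ biprod.desc g (-β)) : F.obj b ⟶ F.obj (a ⊔ b)) w₂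
          = (biprod.desc g (-β)) ((biprod.inr : F.obj b ⟶ F.obj a ⊞ F.obj b) w₂) := rfl
      rw [← this, biprod.inr_desc]
      rfl
    rw [e1, e2]
    have : g w₁ = β w₂ := hw
    rw [this, add_neg_cancel])
  refine ⟨v, ?_, ?_⟩
  · have e1 : ((biprod.lift α f ≫ biprod.fst) : F.obj (a ⊓ b) ⟶ F.obj a) v
        = (biprod.fst : F.obj a ⊞ F.obj b ⟶ F.obj a) (biprod.lift α f v) := rfl
    have e2 := congrArg (biprod.fst : F.obj a ⊞ F.obj b ⟶ F.obj a) hv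
    rw [← e1, biprod.lift_fst] at e2
    rw [hx₂, map_add] at e2
    have e3 : (biprod.fst : F.obj a ⊞ F.obj b ⟶ F.obj a)
        ((biprod.inl : F.obj a ⟶ F.obj a ⊞ F.obj b) w₁) = w₁ := by
      have h' : (biprod.fst : F.obj a ⊞ F.obj b ⟶ F.obj a)
          ((biprod.inl : F.obj a ⟶ F.obj a ⊞ F.obj b) w₁)
          = ((biprod.inl ≫ biprod.fst) : F.obj a ⟶ F.obj a) w₁ := rfl
      rw [h', biprod.inl_fst]; rfl
    have e4 : (biprod.fst : F.obj a ⊞ F.obj b ⟶ F.obj a)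
        ((biprod.inr : F.obj b ⟶ F.obj a ⊞ F.obj b) w₂) = 0 := by
      have h' : (biprod.fst : F.obj a ⊞ F.obj b ⟶ F.obj a)
          ((biprod.inr : F.obj b ⟶ F.obj a ⊞ F.obj b) w₂)
          = ((biprod.inr ≫ biprod.fst) : F.obj b ⟶ F.obj a) w₂ := rfl
      rw [h', biprod.inr_fst]; rfl
    rw [e3, e4, add_zero] at e2
    exact e2
  · have e1 : ((biprod.lift α f ≫ biprod.snd) : F.obj (a ⊓ b) ⟶ F.obj b) v
        = (biprod.snd : F.obj a ⊞ F.obj b ⟶ F.obj b) (biprod.lift α f v) := rfl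
    have e2 := congrArg (biprod.snd : F.obj a ⊞ F.obj b ⟶ F.obj b) hv
    rw [← e1, biprod.lift_snd] at e2
    rw [hx₂, map_add] at e2
    have e3 : (biprod.snd : F.obj a ⊞ F.obj b ⟶ F.obj b)
        ((biprod.inl : F.obj a ⟶ F.obj a ⊞ F.obj b) w₁) = 0 := by
      have h' : (biprod.snd : F.obj a ⊞ F.obj b ⟶ F.obj b)
          ((biprod.inl : F.obj a ⟶ F.obj a ⊞ F.obj b) w₁)
          = ((biprod.inl ≫ biprod.snd) : F.obj a ⟶ F.obj b) w₁ := rfl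
      rw [h', biprod.inl_snd]; rfl
    have e4 : (biprod.snd : F.obj a ⊞ F.obj b ⟶ F.obj b)
        ((biprod.inr : F.obj b ⟶ F.obj a ⊞ F.obj b) w₂) = w₂ := by
      have h' : (biprod.snd : F.obj a ⊞ F.obj b ⟶ F.obj b)
          ((biprod.inr : F.obj b ⟶ F.obj a ⊞ F.obj b) w₂)
          = ((biprod.inr ≫ biprod.snd) : F.obj b ⟶ F.obj b) w₂ := rfl
      rw [h', biprod.inr_snd]; rfl
    rw [e3, e4, zero_add] at e2
    exact e2

/-- Lifting a linear map through another one with larger range. -/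
lemma lift_of_range_le {U V T : Type*} [AddCommGroup U] [AddCommGroup V] [AddCommGroup T]
    [Module 𝔽 U] [Module 𝔽 V] [Module 𝔽 T] (Φ : V →ₗ[𝔽] T) (Ψ : U →ₗ[𝔽] T)
    (h : LinearMap.range Ψ ≤ LinearMap.range Φ) :
    ∃ s : U →ₗ[𝔽] V, ∀ u, Φ (s u) = Ψ u := by
  obtain ⟨s, hs⟩ := Module.projective_lifting_property Φ.rangeRestrict
    (Ψ.codRestrict (LinearMap.range Φ) (fun u => h ⟨u, rfl⟩))
    (LinearMap.surjective_rangeRestrict Φ)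
  refine ⟨s, fun u => ?_⟩
  have := congrArg Subtype.val (LinearMap.congr_fun hs u)
  exact this

/-- On the boundary line `y = ⊤`, sections are forced. -/
lemma sec_boundary_snd {p : ENNReal × ENNReal} (hle : (p.1, (⊤:ENNReal)) ≤ p)
    {s : pbSubmodule F p →ₗ[𝔽] F.obj p} (hs : IsSec F s) (u : pbSubmodule F p) :
    s u = res F hle u.val.1 := by
  have h1 := congrArg (fun z : pbSubmodule F p => z.val.1) (hs u)
  simp only [toPB_coe_fst] at h1
  have h2 := congrArg (res F hle) h1
  rw [res_res, res_self] at h2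
  exact h2

/-- On the boundary line `x = ⊤`, sections are forced. -/
lemma sec_boundary_fst {p : ENNReal × ENNReal} (hle : ((⊤:ENNReal), p.2) ≤ p)
    {s : pbSubmodule F p →ₗ[𝔽] F.obj p} (hs : IsSec F s) (u : pbSubmodule F p) :
    s u = res F hle u.val.2 := by
  have h1 := congrArg (fun z : pbSubmodule F p => z.val.2) (hs u)
  simp only [toPB_coe_snd] at h1
  have h2 := congrArg (res F hle) h1
  rw [res_res, res_self] at h2
  exact h2

end MESplit
namespace MESplit

variable {𝔽 : Type*} [Field 𝔽] (F : ENNReal × ENNReal ⥤ ModuleCat 𝔽)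

/-- The canonical section on the boundary lines. -/
noncomputable def sB (p : ENNReal × ENNReal) : pbSubmodule F p →ₗ[𝔽] F.obj p :=
  if hp : p.2 = ⊤ then
    (res F (⟨le_rfl, hp.ge⟩ : (p.1, (⊤:ENNReal)) ≤ p)).comp
      ((LinearMap.fst 𝔽 (F.obj (p.1, ⊤)) (F.obj (⊤, p.2))).comp (pbSubmodule F p).subtype)
  else if hp1 : p.1 = ⊤ then
    (res F (⟨hp1.ge, le_rfl⟩ : ((⊤:ENNReal), p.2) ≤ p)).comp
      ((LinearMap.snd 𝔽 (F.obj (p.1, ⊤)) (F.obj (⊤, p.2))).comp (pbSubmodule F p).subtype)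
  else 0

lemma sB_apply_snd {p : ENNReal × ENNReal} (hp : p.2 = ⊤) (u : pbSubmodule F p) :
    sB F p u = res F (⟨le_rfl, hp.ge⟩ : (p.1, (⊤:ENNReal)) ≤ p) u.val.1 := by
  rw [sB, dif_pos hp]; rfl

lemma sB_apply_fst {p : ENNReal × ENNReal} (hp : p.1 = ⊤) (hp2 : ¬ p.2 = ⊤)
    (u : pbSubmodule F p) :
    sB F p u = res F (⟨hp.ge, le_rfl⟩ : ((⊤:ENNReal), p.2) ≤ p) u.val.2 := by
  rw [sB, dif_neg hp2, dif_pos hp]; rfl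

lemma isSec_sB {p : ENNReal × ENNReal} (hp : p.1 = ⊤ ∨ p.2 = ⊤) : IsSec F (sB F p) := by
  intro u
  have hmem := (mem_pb F u.val).mp u.2
  by_cases h2 : p.2 = ⊤
  · rw [sB_apply_snd F h2]
    apply Subtype.ext
    apply Prod.ext
    · rw [toPB_coe_fst, res_res, res_self]
    · rw [toPB_coe_snd, res_res]
      have h3 : ((⊤:ENNReal), ⊤) ≤ (⊤, p.2) := ⟨le_rfl, h2.ge⟩
      calc res F (⟨le_top, h2.ge⟩ : (p.1, (⊤:ENNReal)) ≤ (⊤, p.2)) u.val.1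
          = res F h3 (res F (⟨le_top, le_rfl⟩ : (p.1, (⊤:ENNReal)) ≤ (⊤,⊤)) u.val.1) := by
            rw [res_res]
        _ = res F h3 (res F (⟨le_rfl, le_top⟩ : ((⊤:ENNReal), p.2) ≤ (⊤,⊤)) u.val.2) := by
            rw [hmem]
        _ = u.val.2 := by rw [res_res, res_self]
  · have h1 : p.1 = ⊤ := hp.resolve_right h2
    rw [sB_apply_fst F h1 h2]
    apply Subtype.ext
    apply Prod.ext
    · rw [toPB_coe_fst, res_res]
      have h3 : ((⊤:ENNReal), ⊤) ≤ (p.1, (⊤:ENNReal)) := ⟨h1.ge, le_rfl⟩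
      calc res F (⟨h1.ge, le_top⟩ : ((⊤:ENNReal), p.2) ≤ (p.1, (⊤:ENNReal))) u.val.2
          = res F h3 (res F (⟨le_rfl, le_top⟩ : ((⊤:ENNReal), p.2) ≤ (⊤,⊤)) u.val.2) := by
            rw [res_res]
        _ = res F h3 (res F (⟨le_top, le_rfl⟩ : (p.1, (⊤:ENNReal)) ≤ (⊤,⊤)) u.val.1) := by
            rw [hmem]
        _ = u.val.1 := by rw [res_res, res_self]
    · rw [toPB_coe_snd, res_res, res_self]

lemma natAt_sB {p q : ENNReal × ENNReal} (hp : p.1 = ⊤ ∨ p.2 = ⊤)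
    (hq : q.1 = ⊤ ∨ q.2 = ⊤) (h : p ≤ q) : NatAt F h (sB F p) (sB F q) := by
  intro u
  have hmem := (mem_pb F u.val).mp u.2
  by_cases hq2 : q.2 = ⊤
  · rw [sB_apply_snd F hq2, gPB_coe_fst]
    rw [res_res]
    by_cases hp2 : p.2 = ⊤
    · rw [sB_apply_snd F hp2, res_res]
    · have hp1 : p.1 = ⊤ := hp.resolve_right hp2
      rw [sB_apply_fst F hp1 hp2, res_res]
      have h3 : ((⊤:ENNReal), ⊤) ≤ q := ⟨hp1.ge.trans h.1, hq2.ge⟩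
      calc res F (⟨hp1.ge.trans h.1, h.2⟩ : ((⊤:ENNReal), p.2) ≤ q) u.val.2
          = res F h3 (res F (⟨le_rfl, le_top⟩ : ((⊤:ENNReal), p.2) ≤ (⊤,⊤)) u.val.2) := by
            rw [res_res]
        _ = res F h3 (res F (⟨le_top, le_rfl⟩ : (p.1, (⊤:ENNReal)) ≤ (⊤,⊤)) u.val.1) := by
            rw [hmem]
        _ = res F (⟨h.1, le_top.trans hq2.ge⟩ : (p.1, (⊤:ENNReal)) ≤ q) u.val.1 := by rw [res_res]
  · have hq1 : q.1 = ⊤ := hq.resolve_right hq2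
    rw [sB_apply_fst F hq1 hq2, gPB_coe_snd, res_res]
    have hp2 : ¬ p.2 = ⊤ := fun hp2 => hq2 (top_le_iff.mp (hp2 ▸ h.2))
    have hp1 : p.1 = ⊤ := hp.resolve_right hp2
    rw [sB_apply_fst F hp1 hp2, res_res]

end MESplit
namespace MESplit

variable {𝔽 : Type*} [Field 𝔽] (F : ENNReal × ENNReal ⥤ ModuleCat 𝔽)

/-- The key extension step: a linear section at `p` compatible with given ones
at the two covers `qr`, `qu`. -/
lemma exists_secAt (hme : TwoMiddleExact F)
    (s : ∀ q : ENNReal × ENNReal, pbSubmodule F q →ₗ[𝔽] F.obj q)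
    (p qr qu : ENNReal × ENNReal)
    (hpr : p ≤ qr) (hpu : p ≤ qu) (hinf : qr ⊓ qu = p)
    (hrB : qr ≤ (⊤, p.2)) (huA : qu ≤ (p.1, ⊤))
    (hsecA : IsSec F (s (p.1, ⊤))) (hsecB : IsSec F (s (⊤, p.2)))
    (hnat_r : NatAt F (le_sup_left : qr ≤ qr ⊔ qu) (s qr) (s (qr ⊔ qu)))
    (hnat_u : NatAt F (le_sup_right : qu ≤ qr ⊔ qu) (s qu) (s (qr ⊔ qu)))
    (hnat_uA : NatAt F huA (s qu) (s (p.1, ⊤)))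
    (hnat_rB : NatAt F hrB (s qr) (s (⊤, p.2))) :
    ∃ σ : pbSubmodule F p →ₗ[𝔽] F.obj p,
      IsSec F σ ∧ NatAt F hpr σ (s qr) ∧ NatAt F hpu σ (s qu) := by
  have fin : ∀ u : pbSubmodule F p, ∃ v : F.obj p,
      toPB F p v = u ∧ res F hpr v = s qr (gPB F hpr u) ∧
        res F hpu v = s qu (gPB F hpu u) := by
    intro u
    have hagree : res F (le_sup_left : qr ≤ qr ⊔ qu) (s qr (gPB F hpr u))
        = res F (le_sup_right : qu ≤ qr ⊔ qu) (s qu (gPB F hpu u)) := by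
      rw [hnat_r, hnat_u, gPB_gPB, gPB_gPB]
    obtain ⟨v₀, hv₁, hv₂⟩ := mx F hme _ _ hagree
    refine ⟨res F hinf.le v₀, ?_, ?_, ?_⟩
    · apply Subtype.ext
      apply Prod.ext
      · rw [toPB_coe_fst, res_res]
        calc res F ((hinf.le).trans (⟨le_rfl, le_top⟩ : p ≤ (p.1, ⊤))) v₀
            = res F huA (res F (inf_le_right : qr ⊓ qu ≤ qu) v₀) := by rw [res_res]
          _ = res F huA (s qu (gPB F hpu u)) := by rw [hv₂]
          _ = s (p.1, ⊤) (gPB F huA (gPB F hpu u)) := hnat_uA _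
          _ = s (p.1, ⊤) (gPB F (hpu.trans huA) u) := by rw [gPB_gPB]
          _ = u.val.1 := by
              rw [sec_boundary_snd F le_rfl hsecA, gPB_coe_fst, res_res, res_self]
      · rw [toPB_coe_snd, res_res]
        calc res F ((hinf.le).trans (⟨le_top, le_rfl⟩ : p ≤ (⊤, p.2))) v₀
            = res F hrB (res F (inf_le_left : qr ⊓ qu ≤ qr) v₀) := by rw [res_res]
          _ = res F hrB (s qr (gPB F hpr u)) := by rw [hv₁]
          _ = s (⊤, p.2) (gPB F hrB (gPB F hpr u)) := hnat_rB _
          _ = s (⊤, p.2) (gPB F (hpr.trans hrB) u) := by rw [gPB_gPB]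
          _ = u.val.2 := by
              rw [sec_boundary_fst F le_rfl hsecB, gPB_coe_snd, res_res, res_self]
    · rw [res_res]; exact hv₁
    · rw [res_res]; exact hv₂
  set Φ : F.obj p →ₗ[𝔽] (pbSubmodule F p × (F.obj qr × F.obj qu)) :=
    LinearMap.prod (toPB F p) (LinearMap.prod (res F hpr) (res F hpu)) with hΦ
  set Ψ : pbSubmodule F p →ₗ[𝔽] (pbSubmodule F p × (F.obj qr × F.obj qu)) :=
    LinearMap.prod LinearMap.id
      (LinearMap.prod ((s qr).comp (gPB F hpr)) ((s qu).comp (gPB F hpu))) with hΨ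
  have hrange : LinearMap.range Ψ ≤ LinearMap.range Φ := by
    rintro t ⟨u, rfl⟩
    obtain ⟨v, h1, h2, h3⟩ := fin u
    refine ⟨v, ?_⟩
    rw [hΦ, hΨ]
    simp only [LinearMap.prod_apply, Pi.prod, Function.prod_apply, LinearMap.comp_apply, LinearMap.id_apply]
    rw [h1, h2, h3]
  obtain ⟨σ, hσ⟩ := lift_of_range_le Φ Ψ hrange
  have hcomp : ∀ u, (toPB F p (σ u), (res F hpr (σ u), res F hpu (σ u)))
      = (u, (s qr (gPB F hpr u), s qu (gPB F hpu u))) := by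
    intro u
    have := hσ u
    rw [hΦ, hΨ] at this
    simpa only [LinearMap.prod_apply, Pi.prod, Function.prod_apply, LinearMap.comp_apply,
      LinearMap.id_apply] using this
  refine ⟨σ, fun u => ?_, fun u => ?_, fun u => ?_⟩
  · exact congrArg Prod.fst (hcomp u)
  · exact congrArg (fun t => t.2.1) (hcomp u)
  · exact congrArg (fun t => t.2.2) (hcomp u)

end MESplit
namespace MESplit

variable {𝔽 : Type*} [Field 𝔽] (F : ENNReal × ENNReal ⥤ ModuleCat 𝔽)

/-- A family of sections, compatible over a (finite) set of indices. -/
def SolOn (S : Finset (ENNReal × ENNReal))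
    (s : ∀ q : ENNReal × ENNReal, pbSubmodule F q →ₗ[𝔽] F.obj q) : Prop :=
  (∀ q ∈ S, IsSec F (s q)) ∧
    ∀ q ∈ S, ∀ q' ∈ S, ∀ h : q ≤ q', NatAt F h (s q) (s q')

lemma grid_sol (hme : TwoMiddleExact F) (X Y : Finset ENNReal)
    (hX : ⊤ ∈ X) (hY : ⊤ ∈ Y) :
    ∀ (n : ℕ) (S : Finset (ENNReal × ENNReal)), S ⊆ X ×ˢ Y →
      (∀ p ∈ S, ∀ q ∈ X ×ˢ Y, p ≤ q → q ∈ S) →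
      (∀ q ∈ X ×ˢ Y, (q.1 = ⊤ ∨ q.2 = ⊤) → q ∈ S) →
      (S.filter (fun q => ¬(q.1 = ⊤ ∨ q.2 = ⊤))).card = n →
      ∃ s, SolOn F S s := by
  intro n
  induction n using Nat.strong_induction_on with
  | _ n IH =>
    intro S hST hSup hBd hcard
    rcases Nat.eq_zero_or_pos n with h0 | hpos
    · -- base case : only boundary points
      have hbd : ∀ q ∈ S, q.1 = ⊤ ∨ q.2 = ⊤ := by
        intro q hq
        by_contra hq'
        have hmem : q ∈ S.filter (fun q => ¬(q.1 = ⊤ ∨ q.2 = ⊤)) :=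
          Finset.mem_filter.mpr ⟨hq, hq'⟩
        have hemp : S.filter (fun q => ¬(q.1 = ⊤ ∨ q.2 = ⊤)) = ∅ :=
          Finset.card_eq_zero.mp (by rw [hcard, h0])
        rw [hemp] at hmem
        exact absurd hmem (Finset.notMem_empty q)
      exact ⟨sB F, fun q hq => isSec_sB F (hbd q hq),
        fun q hq q' hq' h => natAt_sB F (hbd q hq) (hbd q' hq') h⟩
    · -- inductive step
      classical
      have hne : (S.filter (fun q => ¬(q.1 = ⊤ ∨ q.2 = ⊤))).Nonempty := by
        rw [← Finset.card_pos, hcard]; exact hpos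
      obtain ⟨p, hpmin'⟩ := Finset.exists_minimal hne
      have hpmem : p ∈ S.filter (fun q => ¬(q.1 = ⊤ ∨ q.2 = ⊤)) := hpmin'.prop
      have hpmin : ∀ x ∈ S.filter (fun q => ¬(q.1 = ⊤ ∨ q.2 = ⊤)), ¬x < p :=
        fun x hx => hpmin'.not_lt hx
      have hpS : p ∈ S := (Finset.mem_filter.mp hpmem).1
      have hpint : ¬(p.1 = ⊤ ∨ p.2 = ⊤) := (Finset.mem_filter.mp hpmem).2
      have hp1 : p.1 ≠ ⊤ := fun h => hpint (Or.inl h)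
      have hp2 : p.2 ≠ ⊤ := fun h => hpint (Or.inr h)
      have hpT : p ∈ X ×ˢ Y := hST hpS
      have hpX : p.1 ∈ X := (Finset.mem_product.mp hpT).1
      have hpY : p.2 ∈ Y := (Finset.mem_product.mp hpT).2
      -- no point of S lies strictly below p
      have noless : ∀ q ∈ S, q ≤ p → q = p := by
        intro q hq hle
        by_contra hne'
        have hlt : q < p := lt_of_le_of_ne hle hne'
        have hint : ¬(q.1 = ⊤ ∨ q.2 = ⊤) := by
          rintro (h | h)
          · exact hp1 (top_le_iff.mp (h ▸ hle.1))
          · exact hp2 (top_le_iff.mp (h ▸ hle.2))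
        exact hpmin q (Finset.mem_filter.mpr ⟨hq, hint⟩) hlt
      -- the smaller set
      set S' := S.erase p with hS'
      have hsub' : S' ⊆ X ×ˢ Y := (Finset.erase_subset _ _).trans hST
      have hup' : ∀ a ∈ S', ∀ q ∈ X ×ˢ Y, a ≤ q → q ∈ S' := by
        intro a ha q hq hle
        have haS : a ∈ S := Finset.mem_of_mem_erase ha
        have hqS : q ∈ S := hSup a haS q hq hle
        refine Finset.mem_erase.mpr ⟨?_, hqS⟩
        intro hqp
        subst hqp
        exact (Finset.mem_erase.mp ha).1 (noless a haS hle)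
      have hbd' : ∀ q ∈ X ×ˢ Y, (q.1 = ⊤ ∨ q.2 = ⊤) → q ∈ S' := by
        intro q hq hbq
        refine Finset.mem_erase.mpr ⟨?_, hBd q hq hbq⟩
        intro h; exact hpint (h ▸ hbq)
      have hcard' : (S'.filter (fun q => ¬(q.1 = ⊤ ∨ q.2 = ⊤))).card = n - 1 := by
        rw [hS', Finset.filter_erase, Finset.card_erase_of_mem hpmem, hcard]
      obtain ⟨s, hsec, hnat⟩ := IH (n - 1) (Nat.sub_lt hpos Nat.one_pos) S'
        hsub' hup' hbd' hcard'
      -- next coordinates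
      have hXne : (X.filter (fun z => p.1 < z)).Nonempty :=
        ⟨⊤, Finset.mem_filter.mpr ⟨hX, lt_top_iff_ne_top.mpr hp1⟩⟩
      have hYne : (Y.filter (fun z => p.2 < z)).Nonempty :=
        ⟨⊤, Finset.mem_filter.mpr ⟨hY, lt_top_iff_ne_top.mpr hp2⟩⟩
      set x' := (X.filter (fun z => p.1 < z)).min' hXne with hx'def
      set y' := (Y.filter (fun z => p.2 < z)).min' hYne with hy'def
      have hx'mem := Finset.min'_mem _ hXne
      have hy'mem := Finset.min'_mem _ hYne
      have hx'X : x' ∈ X := (Finset.mem_filter.mp hx'mem).1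
      have hy'Y : y' ∈ Y := (Finset.mem_filter.mp hy'mem).1
      have hpx' : p.1 < x' := (Finset.mem_filter.mp hx'mem).2
      have hpy' : p.2 < y' := (Finset.mem_filter.mp hy'mem).2
      set qr : ENNReal × ENNReal := (x', p.2) with hqrdef
      set qu : ENNReal × ENNReal := (p.1, y') with hqudef
      have hpr : p ≤ qr := ⟨hpx'.le, le_rfl⟩
      have hpu : p ≤ qu := ⟨le_rfl, hpy'.le⟩
      have hqrT : qr ∈ X ×ˢ Y := Finset.mem_product.mpr ⟨hx'X, hpY⟩
      have hquT : qu ∈ X ×ˢ Y := Finset.mem_product.mpr ⟨hpX, hy'Y⟩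
      have hqrS' : qr ∈ S' := by
        refine Finset.mem_erase.mpr ⟨?_, hSup p hpS qr hqrT hpr⟩
        intro h; exact hpx'.ne' (congrArg Prod.fst h)
      have hquS' : qu ∈ S' := by
        refine Finset.mem_erase.mpr ⟨?_, hSup p hpS qu hquT hpu⟩
        intro h; exact hpy'.ne' (congrArg Prod.snd h)
      have hsupeq : qr ⊔ qu = (x', y') := by
        apply Prod.ext
        · exact sup_eq_left.mpr hpx'.le
        · exact sup_eq_right.mpr hpy'.le
      have hqruS' : qr ⊔ qu ∈ S' := by
        rw [hsupeq]
        refine Finset.mem_erase.mpr ⟨?_, hSup p hpS (x', y')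
          (Finset.mem_product.mpr ⟨hx'X, hy'Y⟩) ⟨hpx'.le, hpy'.le⟩⟩
        intro h; exact hpx'.ne' (congrArg Prod.fst h)
      have hinf : qr ⊓ qu = p := by
        apply Prod.ext
        · exact inf_eq_right.mpr hpx'.le
        · exact inf_eq_left.mpr hpy'.le
      have hrB : qr ≤ (⊤, p.2) := ⟨le_top, le_rfl⟩
      have huA : qu ≤ (p.1, ⊤) := ⟨le_rfl, le_top⟩
      have hbAS' : (p.1, (⊤:ENNReal)) ∈ S' :=
        hbd' _ (Finset.mem_product.mpr ⟨hpX, hY⟩) (Or.inr rfl)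
      have hbBS' : ((⊤:ENNReal), p.2) ∈ S' :=
        hbd' _ (Finset.mem_product.mpr ⟨hX, hpY⟩) (Or.inl rfl)
      obtain ⟨σ, hσsec, hσr, hσu⟩ := exists_secAt F hme s p qr qu hpr hpu hinf hrB huA
        (hsec _ hbAS') (hsec _ hbBS')
        (hnat qr hqrS' _ hqruS' le_sup_left)
        (hnat qu hquS' _ hqruS' le_sup_right)
        (hnat qu hquS' _ hbAS' huA)
        (hnat qr hqrS' _ hbBS' hrB)
      -- the dichotomy for points above p
      have dicho : ∀ q' ∈ S', p ≤ q' → qr ≤ q' ∨ qu ≤ q' := by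
        intro q' hq' hle
        have hq'T : q' ∈ X ×ˢ Y := hsub' hq'
        rcases eq_or_lt_of_le hle.1 with h1 | h1
        · right
          have h2 : p.2 < q'.2 := by
            rcases eq_or_lt_of_le hle.2 with h2 | h2
            · exfalso
              exact (Finset.mem_erase.mp hq').1 (Prod.ext h1.symm h2.symm)
            · exact h2
          exact ⟨h1.le, Finset.min'_le _ _ (Finset.mem_filter.mpr
            ⟨(Finset.mem_product.mp hq'T).2, h2⟩)⟩
        · left
          exact ⟨Finset.min'_le _ _ (Finset.mem_filter.mpr
            ⟨(Finset.mem_product.mp hq'T).1, h1⟩), hle.2⟩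
      -- assemble
      refine ⟨Function.update s p σ, ?_, ?_⟩
      · intro q hq
        rcases eq_or_ne q p with rfl | hqp
        · rw [Function.update_self]; exact hσsec
        · rw [Function.update_of_ne hqp]
          exact hsec q (Finset.mem_erase.mpr ⟨hqp, hq⟩)
      · intro q hq q' hq' h
        rcases eq_or_ne q p with rfl | hqp
        · rcases eq_or_ne q' q with rfl | hq'p
          · rw [Function.update_self]
            exact natAt_self F h _
          · rw [Function.update_self, Function.update_of_ne hq'p]
            have hq'S' : q' ∈ S' := Finset.mem_erase.mpr ⟨hq'p, hq'⟩
            rcases dicho q' hq'S' h with hc | hc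
            · exact natAt_trans F hpr hc hσr (hnat qr hqrS' q' hq'S' hc)
            · exact natAt_trans F hpu hc hσu (hnat qu hquS' q' hq'S' hc)
        · rcases eq_or_ne q' p with rfl | hq'p
          · exact absurd (noless q hq h) hqp
          · rw [Function.update_of_ne hqp, Function.update_of_ne hq'p]
            exact hnat q (Finset.mem_erase.mpr ⟨hqp, hq⟩) q'
              (Finset.mem_erase.mpr ⟨hq'p, hq'⟩) h

end MESplit
namespace MESplit

variable {𝔽 : Type*} [Field 𝔽]

/-- A downward-directed family of nonempty affine subspaces of a finite-dimensional
space has a common point. -/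
lemma aff_directed_inter {M : Type*} [AddCommGroup M] [Module 𝔽 M]
    [FiniteDimensional 𝔽 M] (𝒮 : Set (AffineSubspace 𝔽 M)) (hne : 𝒮.Nonempty)
    (hmem : ∀ S ∈ 𝒮, (S : Set M).Nonempty)
    (hdir : ∀ S ∈ 𝒮, ∀ T ∈ 𝒮, ∃ U ∈ 𝒮, U ≤ S ∧ U ≤ T) :
    ∃ x : M, ∀ S ∈ 𝒮, x ∈ S := by
  have hDne : ((fun S : AffineSubspace 𝔽 M => Module.finrank 𝔽 S.direction) '' 𝒮).Nonempty :=
    hne.image _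
  obtain ⟨T, hT𝒮, hTrank⟩ := Nat.sInf_mem hDne
  have hTmin : ∀ S ∈ 𝒮, Module.finrank 𝔽 T.direction ≤ Module.finrank 𝔽 S.direction := by
    intro S hS
    have : Module.finrank 𝔽 T.direction = sInf _ := hTrank
    rw [this]
    exact Nat.sInf_le ⟨S, hS, rfl⟩
  obtain ⟨x, hx⟩ := hmem T hT𝒮
  refine ⟨x, fun S hS => ?_⟩
  obtain ⟨U, hU𝒮, hUS, hUT⟩ := hdir S hS T hT𝒮
  obtain ⟨u, hu⟩ := hmem U hU𝒮
  have hdirle : U.direction ≤ T.direction := AffineSubspace.direction_le hUT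
  have hdeq : U.direction = T.direction :=
    Submodule.eq_of_le_of_finrank_le hdirle (hTmin U hU𝒮)
  have hxU : x ∈ U := by
    have h1 : x -ᵥ u ∈ T.direction := AffineSubspace.vsub_mem_direction hx (hUT hu)
    rw [← hdeq] at h1
    have := AffineSubspace.vadd_mem_of_mem_direction h1 hu
    rwa [vsub_vadd] at this
  exact hUS hxU

end MESplit
namespace MESplit

variable {𝔽 : Type*} [Field 𝔽] (F : ENNReal × ENNReal ⥤ ModuleCat 𝔽)

/-- Families of candidate sections over a finite index set. -/
abbrev Sections (Q : Finset (ENNReal × ENNReal)) : Type _ :=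
  (q : {x // x ∈ Q}) → (pbSubmodule F q.1 →ₗ[𝔽] F.obj q.1)

/-- The (affine) constraint set: families over `Q` that are sections, natural among
themselves, compatible with the given partial solution `(R, σ)`. -/
def Csol (R : Set (ENNReal × ENNReal))
    (σ : ∀ p : ENNReal × ENNReal, pbSubmodule F p →ₗ[𝔽] F.obj p)
    (Q : Finset (ENNReal × ENNReal)) : Set (Sections F Q) :=
  {s | (∀ q : {x // x ∈ Q}, q.1 ∈ R → s q = σ q.1) ∧
       (∀ q : {x // x ∈ Q}, IsSec F (s q)) ∧
       (∀ q q' : {x // x ∈ Q}, ∀ h : q.1 ≤ q'.1, NatAt F h (s q) (s q')) ∧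
       (∀ r ∈ R, ∀ q : {x // x ∈ Q},
         (∀ h : r ≤ q.1, NatAt F h (σ r) (s q)) ∧
         (∀ h : q.1 ≤ r, NatAt F h (s q) (σ r)))}

lemma comb_apply {Q : Finset (ENNReal × ENNReal)} (c : 𝔽) (x y z : Sections F Q)
    (q : {x // x ∈ Q}) (u : pbSubmodule F q.1) :
    (c • (x -ᵥ y) +ᵥ z) q u = c • (x q u - y q u) + z q u := by
  simp only [vsub_eq_sub, vadd_eq_add, Pi.add_apply, Pi.smul_apply, Pi.sub_apply,
    LinearMap.add_apply, LinearMap.smul_apply, LinearMap.sub_apply]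

/-- `Csol` as an affine subspace. -/
noncomputable def CsolAff (R : Set (ENNReal × ENNReal))
    (σ : ∀ p : ENNReal × ENNReal, pbSubmodule F p →ₗ[𝔽] F.obj p)
    (Q : Finset (ENNReal × ENNReal)) : AffineSubspace 𝔽 (Sections F Q) where
  carrier := Csol F R σ Q
  smul_vsub_vadd_mem' := by
    rintro c x y z ⟨hx0, hx1, hx2, hx3⟩ ⟨hy0, hy1, hy2, hy3⟩ ⟨hz0, hz1, hz2, hz3⟩
    refine ⟨?_, ?_, ?_, ?_⟩
    · intro q hq
      ext u
      rw [comb_apply, hx0 q hq, hy0 q hq, hz0 q hq]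
      simp
    · intro q u
      rw [comb_apply, map_add, map_smul, map_sub, hx1 q u, hy1 q u, hz1 q u]
      simp
    · intro q q' h u
      rw [comb_apply, map_add, map_smul, map_sub, hx2 q q' h u, hy2 q q' h u,
        hz2 q q' h u, comb_apply]
    · intro r hr q
      constructor
      · intro h u
        rw [comb_apply, ← (hx3 r hr q).1 h u, ← (hy3 r hr q).1 h u, ← (hz3 r hr q).1 h u]
        simp
      · intro h u
        rw [comb_apply, map_add, map_smul, map_sub, (hx3 r hr q).2 h u,
          (hy3 r hr q).2 h u, (hz3 r hr q).2 h u]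
        simp

lemma mem_CsolAff {R σ Q} (s : Sections F Q) :
    s ∈ CsolAff F R σ Q ↔ s ∈ Csol F R σ Q := Iff.rfl

/-- `Csol` is antitone in the partial solution. -/
lemma Csol_anti {R R' : Set (ENNReal × ENNReal)} {σ σ'}
    (hR : R ⊆ R') (hσ : ∀ p ∈ R, σ' p = σ p) (Q) :
    Csol F R' σ' Q ⊆ Csol F R σ Q := by
  rintro s ⟨h0, h1, h2, h3⟩
  refine ⟨fun q hq => by rw [h0 q (hR hq), hσ q.1 hq], h1, h2, fun r hr q => ?_⟩
  constructor
  · intro h; rw [← hσ r hr]; exact (h3 r (hR hr) q).1 h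
  · intro h; rw [← hσ r hr]; exact (h3 r (hR hr) q).2 h

/-- Restriction of solution families along `Q ⊆ Q'`. -/
lemma Csol_restrict {R σ} {Q Q' : Finset (ENNReal × ENNReal)} (hQ : Q ⊆ Q')
    {s : Sections F Q'} (hs : s ∈ Csol F R σ Q') :
    (fun q : {x // x ∈ Q} => s ⟨q.1, hQ q.2⟩) ∈ Csol F R σ Q := by
  obtain ⟨h0, h1, h2, h3⟩ := hs
  exact ⟨fun q hq => h0 _ hq, fun q => h1 _, fun q q' h => h2 _ _ h,
    fun r hr q => ⟨fun h => (h3 r hr ⟨q.1, hQ q.2⟩).1 h,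
      fun h => (h3 r hr ⟨q.1, hQ q.2⟩).2 h⟩⟩

end MESplit
namespace MESplit

variable {𝔽 : Type*} [Field 𝔽] (F : ENNReal × ENNReal ⥤ ModuleCat 𝔽)

lemma pb_fd (hpfd : ∀ p : ENNReal × ENNReal, FiniteDimensional 𝔽 (F.obj p))
    (p : ENNReal × ENNReal) : FiniteDimensional 𝔽 (pbSubmodule F p) := by
  haveI := hpfd (p.1, ⊤)
  haveI := hpfd ((⊤ : ENNReal), p.2)
  infer_instance

lemma sections_fd (hpfd : ∀ p : ENNReal × ENNReal, FiniteDimensional 𝔽 (F.obj p))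
    (Q : Finset (ENNReal × ENNReal)) : FiniteDimensional 𝔽 (Sections F Q) := by
  haveI : ∀ q : {x // x ∈ Q}, FiniteDimensional 𝔽 (pbSubmodule F q.1 →ₗ[𝔽] F.obj q.1) := by
    intro q
    haveI := pb_fd F hpfd q.1
    haveI := hpfd q.1
    infer_instance
  infer_instance

/-- Base admissibility: every finite constraint system is solvable. -/
lemma csol_base_nonempty (hme : TwoMiddleExact F) (Q : Finset (ENNReal × ENNReal)) :
    (Csol F ∅ (sB F) Q).Nonempty := by
  classical
  set X : Finset ENNReal := insert ⊤ (Q.image Prod.fst) with hXdef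
  set Y : Finset ENNReal := insert ⊤ (Q.image Prod.snd) with hYdef
  obtain ⟨s, hsec, hnat⟩ := grid_sol F hme X Y (Finset.mem_insert_self _ _)
    (Finset.mem_insert_self _ _) _ (X ×ˢ Y) le_rfl
    (fun p _ q hq _ => hq) (fun q hq _ => hq) rfl
  have hQT : ∀ q ∈ Q, q ∈ X ×ˢ Y := by
    intro q hq
    refine Finset.mem_product.mpr ⟨?_, ?_⟩
    · exact Finset.mem_insert_of_mem (Finset.mem_image_of_mem _ hq)
    · exact Finset.mem_insert_of_mem (Finset.mem_image_of_mem _ hq)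
  refine ⟨fun q => s q.1, ?_, ?_, ?_, ?_⟩
  · intro q hq; exact absurd hq (Set.notMem_empty _)
  · intro q; exact hsec q.1 (hQT q.1 q.2)
  · intro q q' h; exact hnat q.1 (hQT q.1 q.2) q'.1 (hQT q'.1 q'.2) h
  · intro r hr; exact absurd hr (Set.notMem_empty _)

/-- Partial solutions: a set of points with a compatible family of sections which is
finitely extendable everywhere. -/
structure PartSol where
  R : Set (ENNReal × ENNReal)
  σ : ∀ p : ENNReal × ENNReal, pbSubmodule F p →ₗ[𝔽] F.obj p
  adm : ∀ Q : Finset (ENNReal × ENNReal), (Csol F R σ Q).Nonempty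

/-- Extension order on partial solutions. -/
def psLE (x y : PartSol F) : Prop :=
  x.R ⊆ y.R ∧ ∀ p ∈ x.R, y.σ p = x.σ p

lemma psLE_trans {x y z : PartSol F} (h1 : psLE F x y) (h2 : psLE F y z) : psLE F x z :=
  ⟨h1.1.trans h2.1, fun p hp => (h2.2 p (h1.1 hp)).trans (h1.2 p hp)⟩

end MESplit
namespace MESplit

variable {𝔽 : Type*} [Field 𝔽] (F : ENNReal × ENNReal ⥤ ModuleCat 𝔽)

lemma chain_bound (hme : TwoMiddleExact F)
    (hpfd : ∀ p : ENNReal × ENNReal, FiniteDimensional 𝔽 (F.obj p))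
    (c : Set (PartSol F)) (hc : IsChain (psLE F) c) :
    ∃ ub, ∀ x ∈ c, psLE F x ub := by
  classical
  rcases c.eq_empty_or_nonempty with rfl | hcne
  · exact ⟨⟨∅, sB F, csol_base_nonempty F hme⟩, fun x hx => absurd hx (Set.notMem_empty _)⟩
  set R' : Set (ENNReal × ENNReal) := {p | ∃ x ∈ c, p ∈ x.R} with hR'
  set σ' : ∀ p : ENNReal × ENNReal, pbSubmodule F p →ₗ[𝔽] F.obj p := fun p =>
    if h : ∃ x ∈ c, p ∈ x.R then (Classical.choose h).σ p else sB F p with hσ'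
  have hσcon : ∀ x ∈ c, ∀ p ∈ x.R, σ' p = x.σ p := by
    intro x hx p hp
    have hex : ∃ x ∈ c, p ∈ x.R := ⟨x, hx, hp⟩
    have h1 : σ' p = (Classical.choose hex).σ p := by rw [hσ']; exact dif_pos hex
    obtain ⟨hx₀c, hx₀R⟩ := Classical.choose_spec hex
    rcases eq_or_ne x (Classical.choose hex) with he | hne
    · rw [h1, ← he]
    · rcases hc hx hx₀c hne with h | h
      · rw [h1, h.2 p hp]
      · rw [h1, ← h.2 p hx₀R]
  have adm' : ∀ Q : Finset (ENNReal × ENNReal), (Csol F R' σ' Q).Nonempty := by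
    intro Q
    haveI := sections_fd F hpfd Q
    set 𝒮 := (fun x : PartSol F => CsolAff F x.R x.σ Q) '' c with h𝒮
    obtain ⟨s, hs⟩ := aff_directed_inter 𝒮 (hcne.image _)
      (by rintro S ⟨x, hx, rfl⟩; exact x.adm Q)
      (by
        rintro S ⟨x, hx, rfl⟩ T ⟨y, hy, rfl⟩
        rcases eq_or_ne x y with rfl | hne
        · exact ⟨_, ⟨x, hx, rfl⟩, le_rfl, le_rfl⟩
        · rcases hc hx hy hne with h | h
          · exact ⟨_, ⟨y, hy, rfl⟩, fun _ ht => Csol_anti F h.1 h.2 Q ht, le_rfl⟩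
          · exact ⟨_, ⟨x, hx, rfl⟩, le_rfl, fun _ ht => Csol_anti F h.1 h.2 Q ht⟩)
    obtain ⟨x₀, hx₀⟩ := hcne
    have hs₀ := hs _ ⟨x₀, hx₀, rfl⟩
    refine ⟨s, ?_, fun q => hs₀.2.1 q, fun q q' h => hs₀.2.2.1 q q' h, ?_⟩
    · intro q hq
      obtain ⟨x, hx, hpx⟩ := hq
      rw [(hs _ ⟨x, hx, rfl⟩).1 q hpx, hσcon x hx q.1 hpx]
    · intro r hr q
      obtain ⟨x, hx, hrx⟩ := hr
      constructor
      · intro h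
        rw [hσcon x hx r hrx]
        exact ((hs _ ⟨x, hx, rfl⟩).2.2.2 r hrx q).1 h
      · intro h
        rw [hσcon x hx r hrx]
        exact ((hs _ ⟨x, hx, rfl⟩).2.2.2 r hrx q).2 h
  exact ⟨⟨R', σ', adm'⟩, fun x hx =>
    ⟨fun p hp => ⟨x, hx, hp⟩, fun p hp => hσcon x hx p hp⟩⟩

/-- Existence of a global compatible family of sections. -/
theorem exists_global (hme : TwoMiddleExact F)
    (hpfd : ∀ p : ENNReal × ENNReal, FiniteDimensional 𝔽 (F.obj p)) :
    ∃ t : ∀ p : ENNReal × ENNReal, pbSubmodule F p →ₗ[𝔽] F.obj p,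
      (∀ p, IsSec F (t p)) ∧ ∀ p q : ENNReal × ENNReal, ∀ h : p ≤ q,
        NatAt F h (t p) (t q) := by
  classical
  obtain ⟨m, hm⟩ := exists_maximal_of_chains_bounded (chain_bound F hme hpfd)
    (fun {a b c} => psLE_trans F)
  have hRuniv : ∀ p, p ∈ m.R := by
    intro p
    by_contra hp
    haveI : FiniteDimensional 𝔽 (pbSubmodule F p →ₗ[𝔽] F.obj p) := by
      haveI := pb_fd F hpfd p; haveI := hpfd p; infer_instance
    set proj : ∀ Q : Finset (ENNReal × ENNReal),
        Sections F (insert p Q) →ₗ[𝔽] (pbSubmodule F p →ₗ[𝔽] F.obj p) := fun Q =>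
      LinearMap.proj (⟨p, Finset.mem_insert_self p Q⟩ : {x // x ∈ insert p Q}) with hproj
    set 𝒱 := Set.range (fun Q : Finset (ENNReal × ENNReal) =>
      (CsolAff F m.R m.σ (insert p Q)).map (proj Q).toAffineMap) with h𝒱
    obtain ⟨v, hv⟩ := aff_directed_inter 𝒱 (Set.range_nonempty _)
      (by
        rintro S ⟨Q, rfl⟩
        obtain ⟨s, hs⟩ := m.adm (insert p Q)
        exact ⟨_, AffineSubspace.mem_map_of_mem _ hs⟩)
      (by
        rintro S ⟨Q₁, rfl⟩ T ⟨Q₂, rfl⟩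
        refine ⟨_, ⟨Q₁ ∪ Q₂, rfl⟩, ?_, ?_⟩
        · intro v hv
          obtain ⟨s, hs, rfl⟩ := AffineSubspace.mem_map.mp hv
          refine AffineSubspace.mem_map.mpr
            ⟨fun q => s ⟨q.1, Finset.insert_subset_insert p Finset.subset_union_left q.2⟩,
              Csol_restrict F (Finset.insert_subset_insert p Finset.subset_union_left) hs,
              rfl⟩
        · intro v hv
          obtain ⟨s, hs, rfl⟩ := AffineSubspace.mem_map.mp hv
          refine AffineSubspace.mem_map.mpr
            ⟨fun q => s ⟨q.1, Finset.insert_subset_insert p Finset.subset_union_right q.2⟩,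
              Csol_restrict F (Finset.insert_subset_insert p Finset.subset_union_right) hs,
              rfl⟩)
    set σ' := Function.update m.σ p v with hσ'def
    have hσ'p : σ' p = v := Function.update_self _ _ _
    have hσ'ne : ∀ q, q ≠ p → σ' q = m.σ q := fun q hq => Function.update_of_ne hq _ _
    have adm' : ∀ Q : Finset (ENNReal × ENNReal),
        (Csol F (insert p m.R) σ' Q).Nonempty := by
      intro Q
      obtain ⟨s, hs, hsv⟩ := AffineSubspace.mem_map.mp (hv _ ⟨Q, rfl⟩)
      have hsv' : s ⟨p, Finset.mem_insert_self p Q⟩ = v := hsv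
      refine ⟨fun q => s ⟨q.1, Finset.mem_insert_of_mem q.2⟩, ?_, fun q => hs.2.1 _,
        fun q q' h => hs.2.2.1 _ _ h, ?_⟩
      · rintro ⟨qv, hqv⟩ hq
        rcases Set.mem_insert_iff.mp hq with hqp | hqR
        · dsimp only at hqp ⊢
          subst hqp
          rw [hσ'p, ← hsv']
        · dsimp only at hqR ⊢
          have hne : qv ≠ p := fun e => hp (e ▸ hqR)
          rw [hσ'ne qv hne]
          exact hs.1 _ hqR
      · intro r hr q
        rcases Set.mem_insert_iff.mp hr with hrp | hrR
        · subst hrp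
          constructor
          · intro h
            rw [hσ'p, ← hsv']
            exact hs.2.2.1 ⟨r, Finset.mem_insert_self r Q⟩ ⟨q.1, Finset.mem_insert_of_mem q.2⟩ h
          · intro h
            rw [hσ'p, ← hsv']
            exact hs.2.2.1 ⟨q.1, Finset.mem_insert_of_mem q.2⟩ ⟨r, Finset.mem_insert_self r Q⟩ h
        · have hne : r ≠ p := fun e => hp (e ▸ hrR)
          constructor
          · intro h
            rw [hσ'ne r hne]
            exact (hs.2.2.2 r hrR _).1 h
          · intro h
            rw [hσ'ne r hne]
            exact (hs.2.2.2 r hrR _).2 h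
    have h1 : psLE F m ⟨insert p m.R, σ', adm'⟩ :=
      ⟨Set.subset_insert _ _, fun q hq => hσ'ne q (fun e => hp (e ▸ hq))⟩
    exact hp ((hm _ h1).1 (Set.mem_insert p m.R))
  refine ⟨m.σ, ?_, ?_⟩
  · intro p
    obtain ⟨s, hs⟩ := m.adm {p}
    have h0 := hs.1 ⟨p, Finset.mem_singleton_self p⟩ (hRuniv p)
    have h1 := hs.2.1 ⟨p, Finset.mem_singleton_self p⟩
    rwa [h0] at h1
  · intro p q h
    obtain ⟨s, hs⟩ := m.adm {p, q}
    have hpmem : p ∈ ({p, q} : Finset (ENNReal × ENNReal)) := Finset.mem_insert_self _ _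
    have hqmem : q ∈ ({p, q} : Finset (ENNReal × ENNReal)) :=
      Finset.mem_insert_of_mem (Finset.mem_singleton_self q)
    have h0p := hs.1 ⟨p, hpmem⟩ (hRuniv p)
    have h0q := hs.1 ⟨q, hqmem⟩ (hRuniv q)
    have h2 := hs.2.2.1 ⟨p, hpmem⟩ ⟨q, hqmem⟩ h
    rwa [h0p, h0q] at h2

end MESplit
namespace MESplit

variable {𝔽 : Type*} [Field 𝔽] (F : ENNReal × ENNReal ⥤ ModuleCat 𝔽)

/-- Transition maps of the kernel subfunctor. -/
noncomputable def Kmap {p q : ENNReal × ENNReal} (h : p ≤ q) :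
    (LinearMap.ker (toPB F p)) →ₗ[𝔽] (LinearMap.ker (toPB F q)) :=
  (res F h).restrict (fun x hx => by
    rw [LinearMap.mem_ker, ← toPB_natural, LinearMap.mem_ker.mp hx, map_zero])

lemma Kmap_coe {p q : ENNReal × ENNReal} (h : p ≤ q) (x : LinearMap.ker (toPB F p)) :
    (Kmap F h x).val = res F h x.val := rfl

set_option synthInstance.maxHeartbeats 1000000 in
/-- The kernel subfunctor. -/
noncomputable def Kfun : ENNReal × ENNReal ⥤ ModuleCat 𝔽 where
  obj p := ModuleCat.of 𝔽 (LinearMap.ker (toPB F p))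
  map {p q} h := ModuleCat.ofHom (Kmap F (leOfHom h))
  map_id p := by
    apply ModuleCat.hom_ext
    apply LinearMap.ext
    intro x
    apply Subtype.ext
    exact res_self F _ x.1
  map_comp {p q r} h h' := by
    apply ModuleCat.hom_ext
    apply LinearMap.ext
    intro x
    apply Subtype.ext
    exact (res_res F (leOfHom h) (leOfHom h') x.1).symm

end MESplit

namespace MESplit

variable {𝔽 : Type*} [Field 𝔽] (F : ENNReal × ENNReal ⥤ ModuleCat 𝔽)

set_option synthInstance.maxHeartbeats 1000000 in
/-- The inclusion of the kernel subfunctor. -/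
noncomputable def incl : Kfun F ⟶ F where
  app p := ModuleCat.ofHom (LinearMap.ker (toPB F p)).subtype
  naturality {p q} h := by
    dsimp only [Kfun]
    apply ModuleCat.hom_ext
    apply LinearMap.ext
    intro x
    show res F (leOfHom h) x.1 = (F.map h).hom x.1
    have e : res F (leOfHom h) = (F.map h).hom :=
      congrArg (fun g => (F.map g).hom) (Subsingleton.elim _ _)
    rw [e]

variable (t : ∀ p : ENNReal × ENNReal, pbSubmodule F p →ₗ[𝔽] F.obj p)
  (ht1 : ∀ p, IsSec F (t p))
  (ht2 : ∀ p q : ENNReal × ENNReal, ∀ h : p ≤ q, NatAt F h (t p) (t q))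

set_option synthInstance.maxHeartbeats 1000000 in
/-- The retraction onto the kernel subfunctor. -/
noncomputable def retr : F ⟶ Kfun F where
  app p := ModuleCat.ofHom (LinearMap.codRestrict (LinearMap.ker (toPB F p))
    (LinearMap.id - (t p).comp (toPB F p)) (fun v => by
      have h1 : toPB F p (v - t p (toPB F p v)) = 0 := by
        rw [map_sub, ht1 p (toPB F p v), sub_self]
      simpa [LinearMap.mem_ker, LinearMap.sub_apply, LinearMap.comp_apply] using h1))
  naturality {p q} h := by
    dsimp only [Kfun]
    apply ModuleCat.hom_ext
    apply LinearMap.ext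
    intro v
    apply Subtype.ext
    have e : res F (leOfHom h) = (F.map h).hom :=
      congrArg (fun g => (F.map g).hom) (Subsingleton.elim _ _)
    have hFh : ∀ w : F.obj p, F.map h w = res F (leOfHom h) w := by
      intro w; rw [e]
    show F.map h v - t q (toPB F q (F.map h v)) = res F (leOfHom h) (v - t p (toPB F p v))
    rw [map_sub, hFh, ht2 p q (leOfHom h), toPB_natural]

set_option synthInstance.maxHeartbeats 1000000 in
lemma incl_retr : incl F ≫ retr F t ht1 ht2 = 𝟙 (Kfun F) := by
  apply NatTrans.ext
  funext p
  dsimp only [Kfun]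
  apply ModuleCat.hom_ext
  apply LinearMap.ext
  intro k
  apply Subtype.ext
  show k.1 - t p (toPB F p k.1) = k.1
  rw [LinearMap.mem_ker.mp k.2, map_zero, sub_zero]

end MESplit

set_option synthInstance.maxHeartbeats 1000000 in
set_option maxHeartbeats 1000000 in
/-- Let `F : [0,∞]² → Vec_𝔽` be a pointwise finite-dimensional, middle-exact
bipersistence module. Then the objectwise kernel
`K(x,y) = ker (F(x,y) → lim (F(x,∞) → F(∞,∞) ← F(∞,y)))` defines a subfunctor `K ↪ F`
whose quotient map `F → F/K` is a split epimorphism; in particular `F ≅ K ⊕ F/K`. -/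
theorem middleExact_kernel_splits (F : ENNReal × ENNReal ⥤ ModuleCat 𝔽)
    (hpfd : ∀ p : ENNReal × ENNReal, FiniteDimensional 𝔽 (F.obj p))
    (hme : TwoMiddleExact F) :
    ∃ (K : ENNReal × ENNReal ⥤ ModuleCat 𝔽) (ι : K ⟶ F),
      Mono ι ∧
      (∀ p : ENNReal × ENNReal, LinearMap.range (ι.app p).hom = LinearMap.ker (toPB F p)) ∧
      IsSplitEpi (cokernel.π ι) ∧
      Nonempty (F ≅ K ⊞ cokernel ι) := by
  classical
  obtain ⟨t, ht1, ht2⟩ := MESplit.exists_global F hme hpfd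
  set K := MESplit.Kfun F with hK
  set ι := MESplit.incl F with hι
  set r := MESplit.retr F t ht1 ht2 with hr
  have hcomp : ι ≫ r = 𝟙 K := MESplit.incl_retr F t ht1 ht2
  haveI hmono : Mono ι := by
    haveI : ∀ p : ENNReal × ENNReal, Mono (ι.app p) := by
      intro p
      rw [ModuleCat.mono_iff_injective]
      exact Subtype.val_injective
    exact NatTrans.mono_of_mono_app ι
  set π := cokernel.π ι with hπ
  have hcond : ι ≫ π = 0 := cokernel.condition ι
  have hu : ι ≫ (𝟙 F - r ≫ ι) = 0 := by
    rw [Preadditive.comp_sub, Category.comp_id, ← Category.assoc, hcomp,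
      Category.id_comp, sub_self]
  set t' := cokernel.desc ι (𝟙 F - r ≫ ι) hu with ht'
  have hπt' : π ≫ t' = 𝟙 F - r ≫ ι := cokernel.π_desc ι _ hu
  have hsec : t' ≫ π = 𝟙 (cokernel ι) := by
    rw [← cancel_epi π, ← Category.assoc, hπt', Preadditive.sub_comp,
      Category.id_comp, Category.assoc, hcond, Limits.comp_zero, sub_zero,
      Category.comp_id]
  have ht'r : t' ≫ r = 0 := by
    rw [← cancel_epi π, ← Category.assoc, hπt', Preadditive.sub_comp,
      Category.id_comp, Category.assoc, hcomp, Category.comp_id, sub_self,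
      Limits.comp_zero]
  refine ⟨K, ι, hmono, ?_, ⟨⟨t', hsec⟩⟩, ⟨?_⟩⟩
  · intro p
    exact Submodule.range_subtype _
  · refine ⟨biprod.lift r π, biprod.desc ι t', ?_, ?_⟩
    · rw [biprod.lift_desc, hπt']
      abel
    · apply biprod.hom_ext'
      · rw [Category.comp_id, ← Category.assoc, biprod.inl_desc]
        apply biprod.hom_ext
        · rw [Category.assoc, biprod.lift_fst, hcomp, biprod.inl_fst]
        · rw [Category.assoc, biprod.lift_snd, hcond, biprod.inl_snd]
      · rw [Category.comp_id, ← Category.assoc, biprod.inr_desc]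
        apply biprod.hom_ext
        · rw [Category.assoc, biprod.lift_fst, ht'r, biprod.inr_fst]
        · rw [Category.assoc, biprod.lift_snd, hsec, biprod.inr_snd]
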